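/- Let r ≥ 1, let a_1,…,a_r ≥ 2 be integers, and for each i let (p_k^{(i)}) be an integer sequence eventually periodic with preperiod r_i and period dividing s_i, and let f : ℤ^r → ℤ be such that |f(p_{n_1}^{(1)},…,p_{n_r}^{(r)})| ≤ M for all indices. Then the sum α = ∑_{n_1,…,n_r ≥ 0} f(p_{n_1}^{(1)},…,p_{n_r}^{(r)}) ∏_i a_i^{−n_i} equals P(a_1,…,a_r) / ∏_{i=1}^r a_i^{r_i}(a_i^{s_i} − 1) for some polynomial P ∈ ℤ[X_1,…,X_r] whose degree in X_i is at most r_i + s_i and whose coefficients have absolute value at most 2^r M. -/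

import Mathlib

set_option maxHeartbeats 1000000

open MvPolynomial Finset

private lemma aux_inv_pow_mul_pow {A : ℝ} (hA : 0 < A) {m u : ℕ} (h : m ≤ u) :
    A⁻¹ ^ m * A ^ u = A ^ (u - m) := by
  have h1 : A ^ (u - m) * A ^ m = A ^ u := by rw [← pow_add]; congr 1; omega
  rw [inv_pow, ← h1, mul_comm (A ^ (u - m)) (A ^ m), ← mul_assoc,
    inv_mul_cancel₀ (pow_ne_zero _ hA.ne'), one_mul]

private lemma aux_pi_tsum : ∀ (n : ℕ) (h : Fin n → ℕ → ℝ), (∀ i k, 0 ≤ h i k) →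
    (∀ i, Summable (h i)) →
    Summable (fun g : Fin n → ℕ => ∏ i, h i (g i)) ∧
      (∑' g : Fin n → ℕ, ∏ i, h i (g i)) = ∏ i, ∑' k, h i k := by
  intro n
  induction n with
  | zero =>
      intro h _ _
      have h1 : (fun g : Fin 0 → ℕ => ∏ i, h i (g i)) = fun _ => 1 := by
        funext g; simp
      rw [h1]
      constructor
      · exact summable_of_ne_finset_zero (s := {fun i => i.elim0}) (fun b hb =>
          absurd (by simp [Finset.mem_singleton]; funext i; exact i.elim0) hb)
      · have h2 : (∑' _g : Fin 0 → ℕ, (1 : ℝ)) = 1 :=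
          tsum_eq_single (fun i => i.elim0) (by
            intro b hb; exact absurd (funext fun i => i.elim0) hb)
        rw [h2]; simp
  | succ n ih =>
      intro h h0 hs
      obtain ⟨ihS, ihT⟩ := ih (fun i => h i.succ) (fun i k => h0 _ _) (fun i => hs _)
      have hcomp : ∀ z : ℕ × (Fin n → ℕ),
          (fun g : Fin (n + 1) → ℕ => ∏ i, h i (g i))
              ((Fin.consEquiv (fun _ : Fin (n + 1) => ℕ)) z)
            = h 0 z.1 * ∏ i : Fin n, h i.succ (z.2 i) := by
        intro z
        simp only [Fin.consEquiv_apply]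
        rw [Fin.prod_univ_succ, Fin.cons_zero]
        refine congrArg _ (Finset.prod_congr rfl fun i _ => by rw [Fin.cons_succ])
      have hmulS : Summable (fun z : ℕ × (Fin n → ℕ) =>
          h 0 z.1 * ∏ i : Fin n, h i.succ (z.2 i)) := by
        have h1 : 0 ≤ h 0 := fun k => h0 0 k
        have h2 : 0 ≤ (fun g : Fin n → ℕ => ∏ i, h i.succ (g i)) :=
          fun g => Finset.prod_nonneg fun i _ => h0 _ _
        have h3 := Summable.mul_of_nonneg (hs 0) ihS h1 h2
        exact h3
      have hS2 : Summable ((fun g : Fin (n + 1) → ℕ => ∏ i, h i (g i)) ∘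
          (Fin.consEquiv (fun _ : Fin (n + 1) => ℕ))) :=
        hmulS.congr fun z => (hcomp z).symm
      refine ⟨(Equiv.summable_iff _).mp hS2, ?_⟩
      rw [← Equiv.tsum_eq (Fin.consEquiv (fun _ : Fin (n + 1) => ℕ))
        (fun g : Fin (n + 1) → ℕ => ∏ i, h i (g i))]
      calc (∑' z : ℕ × (Fin n → ℕ), (fun g : Fin (n + 1) → ℕ => ∏ i, h i (g i))
              ((Fin.consEquiv (fun _ : Fin (n + 1) => ℕ)) z))
          = ∑' z : ℕ × (Fin n → ℕ), h 0 z.1 * ∏ i : Fin n, h i.succ (z.2 i) :=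
            tsum_congr hcomp
        _ = (∑' k, h 0 k) * ∑' g : Fin n → ℕ, ∏ i : Fin n, h i.succ (g i) :=
            (Summable.tsum_mul_tsum (hs 0) ihS hmulS).symm
        _ = ∏ i, ∑' k, h i k := by rw [ihT, Fin.prod_univ_succ]

private def qred (R s k : ℕ) : ℕ := if k < R + s then k else R + (k - R) % s

private lemma qred_lt {R s : ℕ} (hs : 1 ≤ s) (k : ℕ) : qred R s k < R + s := by
  unfold qred; split
  · assumption
  · have := Nat.mod_lt (k - R) (show 0 < s by omega); omega

private lemma p_qred (p : ℕ → ℤ) (R s : ℕ)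
    (hper : ∀ k, R ≤ k → p (k + s) = p k) (k : ℕ) : p (qred R s k) = p k := by
  have key : ∀ t, p (R + t % s) = p (R + t) := by
    intro t
    induction t using Nat.strong_induction_on with
    | _ t ih =>
      rcases lt_or_ge t s with h | h
      · rw [Nat.mod_eq_of_lt h]
      · rcases Nat.eq_zero_or_pos s with rfl | hs
        · rw [Nat.mod_zero]
        · have h2 : t % s = (t - s) % s := by
            conv_lhs => rw [show t = t - s + s by omega]
            rw [Nat.add_mod_right]
          have h3 : R + t = (R + (t - s)) + s := by omega
          rw [h2, h3, hper _ (by omega)]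
          exact ih (t - s) (by omega)
  unfold qred; split
  · rfl
  · have h4 : k = R + (k - R) := by omega
    rw [key (k - R), ← h4]

private lemma qred_eq_low {R s m : ℕ} (hm : m < R) (k : ℕ) : qred R s k = m ↔ k = m := by
  unfold qred
  by_cases h : k < R + s
  · rw [if_pos h]
  · rw [if_neg h]
    constructor
    · intro h2
      obtain ⟨B, hB⟩ : ∃ B, (k - R) % s = B := ⟨_, rfl⟩
      rw [hB] at h2; omega
    · intro h2; omega

private lemma qred_eq_high {R s m : ℕ} (hs : 1 ≤ s) (hm1 : R ≤ m) (hm2 : m < R + s) (k : ℕ) :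
    qred R s k = m ↔ ∃ j, k = m + j * s := by
  unfold qred
  by_cases h : k < R + s
  · rw [if_pos h]
    constructor
    · intro h2; exact ⟨0, by omega⟩
    · rintro ⟨j, rfl⟩
      rcases Nat.eq_zero_or_pos j with rfl | hj
      · omega
      · have hjs : s ≤ j * s := Nat.le_mul_of_pos_left s hj
        omega
  · rw [if_neg h]
    constructor
    · intro h2
      refine ⟨(k - R) / s, ?_⟩
      have h1 : (k - R) % s + (k - R) / s * s = k - R := Nat.mod_add_div' (k - R) s
      obtain ⟨B, hB⟩ : ∃ B, (k - R) % s = B := ⟨_, rfl⟩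
      obtain ⟨A, hA⟩ : ∃ A, (k - R) / s * s = A := ⟨_, rfl⟩
      rw [hB, hA] at h1; rw [hB] at h2; rw [hA]
      omega
    · rintro ⟨j, rfl⟩
      rcases Nat.eq_zero_or_pos j with rfl | hj
      · omega
      · have hjs : s ≤ j * s := Nat.le_mul_of_pos_left s hj
        have h3 : m + j * s - R = (m - R) + j * s := by omega
        rw [h3, Nat.add_mul_mod_self_right, Nat.mod_eq_of_lt (by omega)]
        omega

private lemma tsum_fiber_low {x : ℝ} {R s m : ℕ} (hm : m < R) :
    ∑' k : ℕ, (if qred R s k = m then x ^ k else 0) = x ^ m := by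
  have h1 : ∀ k : ℕ, (if qred R s k = m then x ^ k else 0) = (if k = m then x ^ m else 0) := by
    intro k
    by_cases h : k = m
    · subst h; rw [if_pos ((qred_eq_low hm k).mpr rfl), if_pos rfl]
    · rw [if_neg (fun h2 => h ((qred_eq_low hm k).mp h2)), if_neg h]
  rw [tsum_congr h1, tsum_ite_eq]

private lemma tsum_fiber_high {x : ℝ} (hx0 : 0 < x) (hx1 : x < 1) {R s m : ℕ} (hs : 1 ≤ s)
    (hm1 : R ≤ m) (hm2 : m < R + s) :
    ∑' k : ℕ, (if qred R s k = m then x ^ k else 0) = x ^ m * (1 - x ^ s)⁻¹ := by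
  have hbij : (∑' k : ℕ, (if qred R s k = m then x ^ k else 0))
      = ∑' j : ℕ, x ^ (m + j * s) := by
    apply tsum_eq_tsum_of_ne_zero_bij (fun j => m + j.1 * s)
    · intro j1 j2 hj
      apply Subtype.ext
      dsimp only at hj
      have h5 : j1.1 * s = j2.1 * s := by omega
      exact Nat.eq_of_mul_eq_mul_right (by omega) h5
    · intro k hk
      have hc : qred R s k = m := by
        by_contra hc
        simp only [Function.mem_support, if_neg hc] at hk
        exact hk rfl
      obtain ⟨j, rfl⟩ := (qred_eq_high hs hm1 hm2 k).mp hc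
      exact ⟨⟨j, pow_ne_zero _ hx0.ne'⟩, rfl⟩
    · intro j
      rw [if_pos ((qred_eq_high hs hm1 hm2 _).mpr ⟨j.1, rfl⟩)]
  rw [hbij]
  have h6 : ∀ j : ℕ, x ^ (m + j * s) = x ^ m * (x ^ s) ^ j := by
    intro j; rw [pow_add, mul_comm j s, pow_mul]
  rw [tsum_congr h6, tsum_mul_left,
    tsum_geometric_of_lt_one (by positivity) (pow_lt_one₀ hx0.le hx1 (by omega))]

private lemma aux_prod_monomial {ι σ R : Type*} [CommSemiring R] (s : Finset ι)
    (d : ι → σ →₀ ℕ) (b : ι → R) :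
    ∏ i ∈ s, MvPolynomial.monomial (d i) (b i)
      = MvPolynomial.monomial (∑ i ∈ s, d i) (∏ i ∈ s, b i) := by
  classical
  induction s using Finset.induction_on with
  | empty => simp
  | insert _ _ hnotmem ih =>
      rw [Finset.prod_insert hnotmem, Finset.prod_insert hnotmem, Finset.sum_insert hnotmem, ih,
        MvPolynomial.monomial_mul]

/-- The `r`-dimensional version: the multiple series attached to eventually periodic
integer sequences equals `P(a₁,…,a_r) / ∏ aᵢ^{rᵢ}(aᵢ^{sᵢ}−1)` with `deg_{Xᵢ} P ≤ rᵢ + sᵢ`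
and coefficients bounded by `2^r M`. -/
theorem stmt_10 (r : ℕ) (hr : 1 ≤ r) (a : Fin r → ℕ) (ha : ∀ i, 2 ≤ a i)
    (p : Fin r → ℕ → ℤ) (rr ss : Fin r → ℕ) (hss : ∀ i, 1 ≤ ss i)
    (hper : ∀ i, ∀ k, rr i ≤ k → p i (k + ss i) = p i k)
    (f : (Fin r → ℤ) → ℤ) (M : ℤ)
    (hM : ∀ n : Fin r → ℕ, |f (fun i => p i (n i))| ≤ M) :
    Summable (fun n : Fin r → ℕ =>
      (f (fun i => p i (n i)) : ℝ) / ∏ i, (a i : ℝ) ^ (n i)) ∧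
    ∃ P : MvPolynomial (Fin r) ℤ,
      (∀ i, P.degreeOf i ≤ rr i + ss i) ∧
      (∀ m : Fin r →₀ ℕ, |MvPolynomial.coeff m P| ≤ 2 ^ r * M) ∧
      (∑' n : Fin r → ℕ, (f (fun i => p i (n i)) : ℝ) / ∏ i, (a i : ℝ) ^ (n i))
        = ((MvPolynomial.eval (fun i => (a i : ℤ)) P : ℤ) : ℝ) /
            ∏ i, (a i : ℝ) ^ (rr i) * ((a i : ℝ) ^ (ss i) - 1) := by
  classical
  have hA1 : ∀ i, (1 : ℝ) < (a i : ℝ) := by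
    intro i
    have h1 : 1 < a i := lt_of_lt_of_le one_lt_two (ha i)
    exact_mod_cast h1
  have hA0 : ∀ i, (0 : ℝ) < (a i : ℝ) := fun i => lt_trans one_pos (hA1 i)
  set x : Fin r → ℝ := fun i => ((a i : ℝ))⁻¹ with hxdef
  have hx0 : ∀ i, 0 < x i := fun i => inv_pos.mpr (hA0 i)
  have hx1 : ∀ i, x i < 1 := fun i => inv_lt_one_of_one_lt₀ (hA1 i)
  set F : (Fin r → ℕ) → ℤ := fun m => f (fun i => p i (m i)) with hFdef
  have hMF : ∀ n : Fin r → ℕ, |F n| ≤ M := fun n => hM n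
  have hM0 : (0 : ℤ) ≤ M := le_trans (abs_nonneg _) (hM fun _ => 0)
  have hfun : (fun n : Fin r → ℕ => (f (fun i => p i (n i)) : ℝ) / ∏ i, (a i : ℝ) ^ (n i))
      = fun n => (F n : ℝ) * ∏ i, x i ^ (n i) := by
    funext n
    rw [div_eq_mul_inv, ← Finset.prod_inv_distrib]
    congr 1
    exact Finset.prod_congr rfl fun i _ => (inv_pow _ _).symm
  obtain ⟨hgeoS, hgeoT⟩ := aux_pi_tsum r (fun i k => x i ^ k)
    (fun i k => pow_nonneg (hx0 i).le k)
    (fun i => summable_geometric_of_lt_one (hx0 i).le (hx1 i))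
  have hsum : Summable (fun n : Fin r → ℕ => (F n : ℝ) * ∏ i, x i ^ (n i)) := by
    apply Summable.of_norm_bounded (g := fun n : Fin r → ℕ => (M : ℝ) * ∏ i, x i ^ (n i))
      (hgeoS.mul_left _)
    intro n
    have hpn : (0 : ℝ) ≤ ∏ i, x i ^ (n i) :=
      Finset.prod_nonneg fun i _ => pow_nonneg (hx0 i).le _
    rw [Real.norm_eq_abs, abs_mul, abs_of_nonneg hpn]
    refine mul_le_mul_of_nonneg_right ?_ hpn
    rw [← Int.cast_abs]
    exact_mod_cast hMF n
  -- reduction of indices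
  have hq : ∀ n : Fin r → ℕ, F n = F (fun i => qred (rr i) (ss i) (n i)) := by
    intro n
    simp only [hFdef]
    congr 1
    funext i
    exact (p_qred (p i) _ _ (hper i) (n i)).symm
  set box : Finset (Fin r → ℕ) := Fintype.piFinset (fun i => Finset.range (rr i + ss i))
    with hbox
  have hmem : ∀ {m : Fin r → ℕ}, m ∈ box ↔ ∀ i, m i < rr i + ss i := by
    intro m
    rw [hbox, Fintype.mem_piFinset]
    simp only [Finset.mem_range]
  have hqbox : ∀ n : Fin r → ℕ, (fun i => qred (rr i) (ss i) (n i)) ∈ box :=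
    fun n => hmem.mpr fun i => qred_lt (hss i) (n i)
  have hdecomp : ∀ n : Fin r → ℕ, (F n : ℝ) * ∏ i, x i ^ (n i)
      = ∑ m ∈ box, (if (fun i => qred (rr i) (ss i) (n i)) = m
          then (F m : ℝ) * ∏ i, x i ^ (n i) else 0) := by
    intro n
    rw [Finset.sum_ite_eq box (fun i => qred (rr i) (ss i) (n i))
      (fun m => (F m : ℝ) * ∏ i, x i ^ (n i)), if_pos (hqbox n), ← hq n]
  have hfact : ∀ (m n : Fin r → ℕ),
      (if (fun i => qred (rr i) (ss i) (n i)) = m then (F m : ℝ) * ∏ i, x i ^ (n i) else 0)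
        = (F m : ℝ) * ∏ i, (if qred (rr i) (ss i) (n i) = m i then x i ^ (n i) else 0) := by
    intro m n
    by_cases h : (fun i => qred (rr i) (ss i) (n i)) = m
    · rw [if_pos h]
      congr 1
      refine Finset.prod_congr rfl fun i _ => ?_
      rw [if_pos (congrFun h i)]
    · rw [if_neg h]
      obtain ⟨i, hi⟩ : ∃ i, qred (rr i) (ss i) (n i) ≠ m i := by
        by_contra hc
        push_neg at hc
        exact h (funext hc)
      have hz : (∏ i, (if qred (rr i) (ss i) (n i) = m i then x i ^ (n i) else (0:ℝ))) = 0 :=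
        Finset.prod_eq_zero (Finset.mem_univ i) (if_neg hi)
      rw [hz, mul_zero]
  have hcompm : ∀ m : Fin r → ℕ,
      Summable (fun n : Fin r → ℕ =>
        ∏ i, (if qred (rr i) (ss i) (n i) = m i then x i ^ (n i) else 0)) ∧
      (∑' n : Fin r → ℕ, ∏ i, (if qred (rr i) (ss i) (n i) = m i then x i ^ (n i) else 0))
        = ∏ i, ∑' k : ℕ, (if qred (rr i) (ss i) k = m i then x i ^ k else 0) := by
    intro m
    refine aux_pi_tsum r (fun i k => if qred (rr i) (ss i) k = m i then x i ^ k else 0)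
      (fun i k => ?_) (fun i => ?_)
    · split
      · exact pow_nonneg (hx0 i).le _
      · exact le_rfl
    · refine Summable.of_nonneg_of_le (fun k => ?_) (fun k => ?_)
        (summable_geometric_of_lt_one (hx0 i).le (hx1 i))
      · split
        · exact pow_nonneg (hx0 i).le _
        · exact le_rfl
      · split
        · exact le_rfl
        · exact pow_nonneg (hx0 i).le _
  have hstep : (∑' n : Fin r → ℕ, (F n : ℝ) * ∏ i, x i ^ (n i))
      = ∑ m ∈ box, (F m : ℝ) *
          ∏ i, ∑' k : ℕ, (if qred (rr i) (ss i) k = m i then x i ^ k else 0) := by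
    rw [tsum_congr hdecomp, Summable.tsum_finsetSum (fun m _ => by
      refine Summable.congr (((hcompm m).1).mul_left ((F m : ℝ))) fun n => ?_
      exact (hfact m n).symm)]
    refine Finset.sum_congr rfl fun m _ => ?_
    rw [tsum_congr (hfact m), tsum_mul_left, (hcompm m).2]
  -- values of the one-dimensional sums
  set tval : Fin r → ℕ → ℝ := fun i k =>
    (a i : ℝ) ^ (rr i + ss i - k) - (if k < rr i then (a i : ℝ) ^ (rr i - k) else 0) with htval
  have hD0 : ∀ i, (0 : ℝ) < (a i : ℝ) ^ (rr i) * ((a i : ℝ) ^ (ss i) - 1) := by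
    intro i
    refine mul_pos (pow_pos (hA0 i) _) ?_
    have h1 : (1 : ℝ) < (a i : ℝ) ^ (ss i) :=
      one_lt_pow₀ (hA1 i) (Nat.one_le_iff_ne_zero.mp (hss i))
    linarith
  have hS : ∀ (i : Fin r) (mi : ℕ), mi < rr i + ss i →
      (∑' k : ℕ, (if qred (rr i) (ss i) k = mi then x i ^ k else 0))
        = tval i mi / ((a i : ℝ) ^ (rr i) * ((a i : ℝ) ^ (ss i) - 1)) := by
    intro i mi hmi
    rw [eq_div_iff (hD0 i).ne']
    by_cases h : mi < rr i
    · rw [tsum_fiber_low h]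
      simp only [htval, if_pos h]
      have e1 : x i ^ mi * (a i : ℝ) ^ (rr i) = (a i : ℝ) ^ (rr i - mi) :=
        aux_inv_pow_mul_pow (hA0 i) (by omega)
      have e2 : x i ^ mi * (a i : ℝ) ^ (rr i + ss i) = (a i : ℝ) ^ (rr i + ss i - mi) :=
        aux_inv_pow_mul_pow (hA0 i) (by omega)
      calc x i ^ mi * ((a i : ℝ) ^ (rr i) * ((a i : ℝ) ^ (ss i) - 1))
          = x i ^ mi * (a i : ℝ) ^ (rr i + ss i) - x i ^ mi * (a i : ℝ) ^ (rr i) := by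
            rw [pow_add]; ring
        _ = (a i : ℝ) ^ (rr i + ss i - mi) - (a i : ℝ) ^ (rr i - mi) := by rw [e1, e2]
    · have hm1 : rr i ≤ mi := by omega
      rw [tsum_fiber_high (hx0 i) (hx1 i) (hss i) hm1 hmi]
      simp only [htval, if_neg h, sub_zero]
      have hxs : x i ^ ss i < 1 := pow_lt_one₀ (hx0 i).le (hx1 i) (by omega)
      have hne : (1 : ℝ) - x i ^ ss i ≠ 0 := sub_ne_zero.mpr hxs.ne'
      have e2 : (a i : ℝ) ^ (ss i) - 1 = (a i : ℝ) ^ (ss i) * (1 - x i ^ ss i) := by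
        rw [mul_sub, mul_one]
        have e3 : (a i : ℝ) ^ (ss i) * x i ^ ss i = 1 := by
          rw [show x i = ((a i : ℝ))⁻¹ from rfl, inv_pow,
            mul_inv_cancel₀ (pow_ne_zero _ (hA0 i).ne')]
        rw [e3]
      calc x i ^ mi * (1 - x i ^ ss i)⁻¹ * ((a i : ℝ) ^ (rr i) * ((a i : ℝ) ^ (ss i) - 1))
          = x i ^ mi * (a i : ℝ) ^ (rr i + ss i) * ((1 - x i ^ ss i)⁻¹ * (1 - x i ^ ss i)) := by
            rw [e2, pow_add]; ring
        _ = (a i : ℝ) ^ (rr i + ss i - mi) := by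
            rw [inv_mul_cancel₀ hne, mul_one]
            exact aux_inv_pow_mul_pow (hA0 i) (by omega)
  have hfinal : (∑' n : Fin r → ℕ, (F n : ℝ) * ∏ i, x i ^ (n i))
      = (∑ m ∈ box, (F m : ℝ) * ∏ i, tval i (m i)) /
          ∏ i, (a i : ℝ) ^ (rr i) * ((a i : ℝ) ^ (ss i) - 1) := by
    rw [hstep, Finset.sum_div]
    refine Finset.sum_congr rfl fun m hm => ?_
    rw [Finset.prod_congr rfl (fun i _ => hS i (m i) (hmem.mp hm i)),
      Finset.prod_div_distrib, mul_div_assoc]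
  -- the polynomial
  set T : Fin r → ℕ → MvPolynomial (Fin r) ℤ := fun i k =>
    X i ^ (rr i + ss i - k) - (if k < rr i then X i ^ (rr i - k) else 0) with hTdef
  set P : MvPolynomial (Fin r) ℤ := ∑ m ∈ box, C (F m) * ∏ i, T i (m i) with hPdef
  have heqT : ∀ (i : Fin r) (k : ℕ), T i k
      = monomial (Finsupp.single i (rr i - k)) (if k < rr i then (-1 : ℤ) else 0)
        + monomial (Finsupp.single i (rr i + ss i - k)) 1 := by
    intro i k
    simp only [hTdef]
    by_cases h : k < rr i
    · rw [if_pos h, if_pos h, X_pow_eq_monomial, X_pow_eq_monomial,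
        show (monomial (Finsupp.single i (rr i - k)) (-1 : ℤ))
          = -(monomial (Finsupp.single i (rr i - k)) (1 : ℤ)) from map_neg _ 1]
      ring
    · rw [if_neg h, if_neg h, X_pow_eq_monomial]
      simp
  set Emap : (Fin r → ℕ) → Finset (Fin r) → (Fin r →₀ ℕ) := fun m t =>
    (∑ i ∈ t, Finsupp.single i (rr i - m i))
      + ∑ i ∈ Finset.univ \ t, Finsupp.single i (rr i + ss i - m i) with hEdef
  set cc : (Fin r → ℕ) → Finset (Fin r) → ℤ := fun m t =>
    ∏ i ∈ t, (if m i < rr i then (-1 : ℤ) else 0) with hccdef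
  have hprodT : ∀ m : Fin r → ℕ,
      (∏ i, T i (m i)) = ∑ t ∈ Finset.univ.powerset, monomial (Emap m t) (cc m t) := by
    intro m
    rw [Finset.prod_congr rfl fun i _ => heqT i (m i), Finset.prod_add]
    refine Finset.sum_congr rfl fun t _ => ?_
    rw [aux_prod_monomial, aux_prod_monomial, MvPolynomial.monomial_mul]
    simp only [hEdef, hccdef, Finset.prod_const_one, mul_one]
  have hEapp : ∀ (m : Fin r → ℕ) (t : Finset (Fin r)) (j : Fin r),
      Emap m t j = (if j ∈ t then rr j - m j else rr j + ss j - m j) := by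
    intro m t j
    simp only [hEdef, Finsupp.add_apply, Finsupp.finset_sum_apply, Finsupp.single_apply]
    rw [Finset.sum_ite_eq', Finset.sum_ite_eq']
    by_cases h : j ∈ t
    · simp [h]
    · simp [h]
  have hcoeff : ∀ e : Fin r →₀ ℕ, MvPolynomial.coeff e P
      = ∑ t ∈ Finset.univ.powerset, ∑ m ∈ box,
          (if Emap m t = e then F m * cc m t else 0) := by
    intro e
    have h1 : ∀ m ∈ box, MvPolynomial.coeff e (C (F m) * ∏ i, T i (m i))
        = ∑ t ∈ Finset.univ.powerset, (if Emap m t = e then F m * cc m t else 0) := by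
      intro m _
      rw [MvPolynomial.coeff_C_mul, hprodT m, MvPolynomial.coeff_sum, Finset.mul_sum]
      refine Finset.sum_congr rfl fun t _ => ?_
      rw [MvPolynomial.coeff_monomial, mul_ite, mul_zero]
    rw [hPdef, MvPolynomial.coeff_sum, Finset.sum_congr rfl h1, Finset.sum_comm]
  refine ⟨by rw [hfun]; exact hsum, P, ?_, ?_, ?_⟩
  · -- degree bound
    intro i
    rw [MvPolynomial.degreeOf_le_iff]
    intro e he
    by_contra hgt
    push_neg at hgt
    refine MvPolynomial.mem_support_iff.mp he ?_
    rw [hcoeff e]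
    refine Finset.sum_eq_zero fun t _ => Finset.sum_eq_zero fun m _ => ?_
    rw [if_neg]
    intro hEq
    have h2 : Emap m t i = e i := DFunLike.congr_fun hEq i
    rw [hEapp] at h2
    split at h2 <;> omega
  · -- coefficient bound
    intro e
    rw [hcoeff e]
    have hinner : ∀ t : Finset (Fin r),
        |∑ m ∈ box, (if Emap m t = e then F m * cc m t else 0)| ≤ M := by
      intro t
      have hgbound : ∀ m : Fin r → ℕ,
          |(if Emap m t = e then F m * cc m t else 0)| ≤ M := by
        intro m
        split
        · rw [abs_mul]
          have hcc : |cc m t| ≤ 1 := by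
            simp only [hccdef]
            rw [Finset.abs_prod]
            refine Finset.prod_le_one (fun i _ => abs_nonneg _) (fun i _ => ?_)
            split <;> simp
          calc |F m| * |cc m t| ≤ M * 1 := mul_le_mul (hMF m) hcc (abs_nonneg _) hM0
            _ = M := mul_one M
        · simpa using hM0
      have huniq : ∀ m ∈ box, ∀ m' ∈ box,
          (if Emap m t = e then F m * cc m t else 0) ≠ 0 →
          (if Emap m' t = e then F m' * cc m' t else 0) ≠ 0 → m = m' := by
        have hfacts : ∀ m₀ ∈ box, (if Emap m₀ t = e then F m₀ * cc m₀ t else 0) ≠ 0 →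
            (∀ j, (if j ∈ t then rr j - m₀ j else rr j + ss j - m₀ j) = e j)
              ∧ ∀ j ∈ t, m₀ j < rr j := by
          intro m₀ _ hg
          split at hg
          case isTrue hc =>
            constructor
            · intro j
              rw [← hEapp m₀ t j, hc]
            · intro j hj
              by_contra hjr
              refine hg ?_
              have hz : cc m₀ t = 0 := by
                simp only [hccdef]
                exact Finset.prod_eq_zero hj (if_neg hjr)
              rw [hz, mul_zero]
          case isFalse => exact absurd rfl hg
        intro m hm m' hm' hgm hgm'
        obtain ⟨he1, ht1⟩ := hfacts m hm hgm
        obtain ⟨he2, ht2⟩ := hfacts m' hm' hgm'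
        funext j
        have h1 := he1 j
        have h2 := he2 j
        have hb1 := hmem.mp hm j
        have hb2 := hmem.mp hm' j
        by_cases hj : j ∈ t
        · have hc1 := ht1 j hj
          have hc2 := ht2 j hj
          rw [if_pos hj] at h1 h2
          omega
        · rw [if_neg hj] at h1 h2
          omega
      by_cases hex : ∃ m ∈ box, (if Emap m t = e then F m * cc m t else 0) ≠ 0
      · obtain ⟨m₁, hm₁, hne₁⟩ := hex
        rw [Finset.sum_eq_single_of_mem m₁ hm₁ (fun m hm hmne => by
          by_contra h0
          exact hmne (huniq m hm m₁ hm₁ h0 hne₁))]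
        exact hgbound m₁
      · push_neg at hex
        rw [Finset.sum_eq_zero hex]
        simpa using hM0
    calc |∑ t ∈ Finset.univ.powerset, ∑ m ∈ box, (if Emap m t = e then F m * cc m t else 0)|
        ≤ ∑ t ∈ Finset.univ.powerset,
            |∑ m ∈ box, (if Emap m t = e then F m * cc m t else 0)| :=
          Finset.abs_sum_le_sum_abs _ _
      _ ≤ ∑ _t ∈ Finset.univ.powerset, M := Finset.sum_le_sum fun t _ => hinner t
      _ = 2 ^ r * M := by
          rw [Finset.sum_const, Finset.card_powerset, Finset.card_univ, Fintype.card_fin,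
            nsmul_eq_mul]
          push_cast
          ring
  · -- the evaluation identity
    have heval : ((MvPolynomial.eval (fun i => (a i : ℤ)) P : ℤ) : ℝ)
        = ∑ m ∈ box, (F m : ℝ) * ∏ i, tval i (m i) := by
      rw [hPdef]
      rw [map_sum]
      push_cast
      refine Finset.sum_congr rfl fun m _ => ?_
      rw [map_mul, eval_C]
      push_cast
      congr 1
      rw [map_prod]
      push_cast
      refine Finset.prod_congr rfl fun i _ => ?_
      simp only [hTdef, htval, map_sub, map_pow, eval_X, apply_ite (MvPolynomial.eval
        (fun i => (a i : ℤ))), map_zero]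
      push_cast [apply_ite (Int.cast : ℤ → ℝ)]
      ring
    rw [hfun, hfinal, heval]
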